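/- Let p ≥ 2 and n ≥ 1 be integers, and let A_1, …, A_p be real symmetric n×n matrices such that A_1 is diagonal and tr(A_α) = 0 for all α ≥ 2. Set H = tr(A_1), |h|² = Σ_α ‖A_α‖², |h̊|² = |h|² − H²/n, P = Σ_{α≥2} ‖A_α‖², R₁ = Σ_{α,β} (Σ_{i,j} (A_α)_{ij}(A_β)_{ij})² + Σ_{α,β} ‖A_α A_β − A_β A_α‖², and ξ = 2/(4 − sgn(p−2)) (so ξ⁻¹ = 2 if p = 2 and ξ⁻¹ = 3/2 if p ≥ 3). Then R₁ ≤ |h|⁴ + (2|h̊|² − (2/n)H²)·P − ξ⁻¹·P². -/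

import Mathlib

open scoped BigOperators
open Matrix

set_option maxHeartbeats 1600000
open scoped BigOperators
open Matrix

namespace SW

variable {m : Type*} [Fintype m]

/-- Frobenius inner product. -/
def ip (A B : Matrix m m ℝ) : ℝ := ∑ i, ∑ j, A i j * B i j

def nsq (A : Matrix m m ℝ) : ℝ := ip A A

def comm (A B : Matrix m m ℝ) : Matrix m m ℝ := A * B - B * A

lemma ip_comm (A B : Matrix m m ℝ) : ip A B = ip B A := by
  unfold ip; congr 1; ext i; congr 1; ext j; ring

lemma ip_eq_trace (A B : Matrix m m ℝ) : ip A B = Matrix.trace (Aᵀ * B) := by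
  unfold ip
  rw [Matrix.trace]
  simp only [Matrix.diag_apply, Matrix.mul_apply, Matrix.transpose_apply]
  rw [Finset.sum_comm]

lemma nsq_nonneg (A : Matrix m m ℝ) : 0 ≤ nsq A := by
  unfold nsq ip
  apply Finset.sum_nonneg; intro i _
  apply Finset.sum_nonneg; intro j _
  exact mul_self_nonneg _

lemma ip_self_eq_zero {A : Matrix m m ℝ} (h : ip A A = 0) : A = 0 := by
  ext i j
  have h1 : ∀ i ∈ Finset.univ, (0:ℝ) ≤ ∑ j, A i j * A i j := by
    intro i _; apply Finset.sum_nonneg; intro j _; exact mul_self_nonneg _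
  have h2 := (Finset.sum_eq_zero_iff_of_nonneg h1).1 h i (Finset.mem_univ i)
  have h3 : ∀ j ∈ Finset.univ, (0:ℝ) ≤ A i j * A i j := fun j _ => mul_self_nonneg _
  have h4 := (Finset.sum_eq_zero_iff_of_nonneg h3).1 h2 j (Finset.mem_univ j)
  have := mul_self_eq_zero.1 h4
  simpa using this

lemma ip_add_left (A B C : Matrix m m ℝ) : ip (A + B) C = ip A C + ip B C := by
  unfold ip
  rw [← Finset.sum_add_distrib]
  congr 1; ext i
  rw [← Finset.sum_add_distrib]
  congr 1; ext j
  simp [Matrix.add_apply]; ring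

lemma ip_smul_left (c : ℝ) (A B : Matrix m m ℝ) : ip (c • A) B = c * ip A B := by
  unfold ip
  rw [Finset.mul_sum]
  congr 1; ext i
  rw [Finset.mul_sum]
  congr 1; ext j
  simp [Matrix.smul_apply]; ring

lemma ip_sub_left (A B C : Matrix m m ℝ) : ip (A - B) C = ip A C - ip B C := by
  have : A - B = A + (-1 : ℝ) • B := by module
  rw [this, ip_add_left, ip_smul_left]; ring

lemma ip_sum_left {ι : Type*} (s : Finset ι) (f : ι → Matrix m m ℝ) (B : Matrix m m ℝ) :
    ip (∑ a ∈ s, f a) B = ∑ a ∈ s, ip (f a) B := by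
  classical
  induction s using Finset.induction_on with
  | empty => simp [ip]
  | insert _ _ h ih => rw [Finset.sum_insert h, ip_add_left, ih, Finset.sum_insert h]

lemma ip_add_right (A B C : Matrix m m ℝ) : ip A (B + C) = ip A B + ip A C := by
  rw [ip_comm, ip_add_left, ip_comm B A, ip_comm C A]

lemma ip_smul_right (c : ℝ) (A B : Matrix m m ℝ) : ip A (c • B) = c * ip A B := by
  rw [ip_comm, ip_smul_left, ip_comm]

lemma ip_sub_right (A B C : Matrix m m ℝ) : ip A (B - C) = ip A B - ip A C := by
  rw [ip_comm, ip_sub_left, ip_comm B A, ip_comm C A]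

lemma ip_sum_right {ι : Type*} (s : Finset ι) (A : Matrix m m ℝ) (f : ι → Matrix m m ℝ) :
    ip A (∑ a ∈ s, f a) = ∑ a ∈ s, ip A (f a) := by
  rw [ip_comm, ip_sum_left]
  exact Finset.sum_congr rfl fun a _ => ip_comm _ _

lemma nsq_neg (A : Matrix m m ℝ) : nsq (-A) = nsq A := by
  have : -A = (-1 : ℝ) • A := by module
  unfold nsq
  rw [this, ip_smul_left, ip_smul_right]; ring

lemma comm_self (A : Matrix m m ℝ) : comm A A = 0 := by simp [comm]

lemma comm_swap (A B : Matrix m m ℝ) : comm B A = - comm A B := by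
  simp [comm]

variable [DecidableEq m]

lemma ip_conj (U : Matrix m m ℝ) (hU : U * Uᵀ = 1) (X Y : Matrix m m ℝ) :
    ip (Uᵀ * X * U) (Uᵀ * Y * U) = ip X Y := by
  rw [ip_eq_trace, ip_eq_trace]
  have h1 : (Uᵀ * X * U)ᵀ = Uᵀ * Xᵀ * U := by
    rw [Matrix.transpose_mul, Matrix.transpose_mul, Matrix.transpose_transpose]
    rw [Matrix.mul_assoc]
  rw [h1]
  have : Uᵀ * Xᵀ * U * (Uᵀ * Y * U) = Uᵀ * (Xᵀ * (U * Uᵀ) * Y) * U := by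
    simp only [Matrix.mul_assoc]
  rw [this, hU, Matrix.mul_one]
  rw [Matrix.trace_mul_comm, ← Matrix.mul_assoc, ← Matrix.mul_assoc]
  have hU2 : U * Uᵀ = 1 := hU
  rw [hU2, Matrix.one_mul]

lemma comm_conj (U : Matrix m m ℝ) (hU : U * Uᵀ = 1) (hU' : Uᵀ * U = 1) (X Y : Matrix m m ℝ) :
    comm (Uᵀ * X * U) (Uᵀ * Y * U) = Uᵀ * comm X Y * U := by
  unfold comm
  have h : ∀ Z W : Matrix m m ℝ, (Uᵀ * Z * U) * (Uᵀ * W * U) = Uᵀ * (Z * W) * U := by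
    intro Z W
    calc (Uᵀ * Z * U) * (Uᵀ * W * U) = Uᵀ * Z * (U * Uᵀ) * W * U := by
          simp only [Matrix.mul_assoc]
        _ = Uᵀ * (Z * W) * U := by rw [hU]; simp only [Matrix.mul_one, Matrix.mul_assoc]
  rw [h, h, Matrix.mul_sub, Matrix.sub_mul]


lemma knapsack {κ : Type*} [DecidableEq κ] (Q : Finset κ) (ν : κ → ℝ) (N : ℝ)
    (hN : 0 ≤ N)
    (hpart : ∀ F ⊆ Q, ∑ q ∈ F, ν q ≤ ((F.card : ℝ) + 1) * N) :
    ∀ (k : ℕ) (w : κ → ℝ) (M : ℝ), 0 ≤ M → (∀ q ∈ Q, 0 ≤ w q ∧ w q ≤ M) →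
      (Q.filter (fun q => w q ≠ 0)).card ≤ k →
      ∑ q ∈ Q, ν q * w q ≤ N * ((∑ q ∈ Q, w q) + M) := by
  intro k
  induction k with
  | zero =>
    intro w M hM hw hcard
    have hs : Q.filter (fun q => w q ≠ 0) = ∅ := Finset.card_eq_zero.1 (Nat.le_zero.1 hcard)
    have hzero : ∀ q ∈ Q, w q = 0 := by
      intro q hq
      by_contra hne
      have h1 : q ∈ Q.filter (fun q => w q ≠ 0) := Finset.mem_filter.2 ⟨hq, hne⟩
      rw [hs] at h1; exact absurd h1 (Finset.notMem_empty q)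
    have h1 : ∑ q ∈ Q, ν q * w q = 0 := by
      apply Finset.sum_eq_zero; intro q hq; rw [hzero q hq, mul_zero]
    have h2 : ∑ q ∈ Q, w q = 0 := Finset.sum_eq_zero hzero
    rw [h1, h2, zero_add]
    exact mul_nonneg hN hM
  | succ k ih =>
    intro w M hM hw hcard
    set s := Q.filter (fun q => w q ≠ 0) with hs_def
    rcases s.eq_empty_or_nonempty with hse | hsne
    · have hzero : ∀ q ∈ Q, w q = 0 := by
        intro q hq
        by_contra hne
        have h1 : q ∈ s := Finset.mem_filter.2 ⟨hq, hne⟩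
        rw [hse] at h1; exact absurd h1 (Finset.notMem_empty q)
      have h1 : ∑ q ∈ Q, ν q * w q = 0 := by
        apply Finset.sum_eq_zero; intro q hq; rw [hzero q hq, mul_zero]
      have h2 : ∑ q ∈ Q, w q = 0 := Finset.sum_eq_zero hzero
      rw [h1, h2, zero_add]
      exact mul_nonneg hN hM
    · obtain ⟨q₀, hq₀s, hmin⟩ := s.exists_min_image w hsne
      set msm := w q₀ with hm_def
      have hq₀Q : q₀ ∈ Q := (Finset.mem_filter.1 hq₀s).1
      have hm_pos : 0 < msm := by
        have hne := (Finset.mem_filter.1 hq₀s).2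
        rcases lt_or_eq_of_le (hw q₀ hq₀Q).1 with h | h
        · exact h
        · exact absurd h.symm hne
      have hmM : msm ≤ M := (hw q₀ hq₀Q).2
      set w' := fun q => if q ∈ s then w q - msm else 0 with hw'_def
      have hw'bound : ∀ q ∈ Q, 0 ≤ w' q ∧ w' q ≤ M - msm := by
        intro q hq
        by_cases h : q ∈ s
        · simp only [hw'_def, if_pos h]
          exact ⟨by have := hmin q h; linarith, by have := (hw q hq).2; linarith⟩
        · simp only [hw'_def, if_neg h]
          exact ⟨le_refl 0, by linarith⟩
      have hsupp : Q.filter (fun q => w' q ≠ 0) ⊆ s.erase q₀ := by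
        intro q hq
        rcases Finset.mem_filter.1 hq with ⟨hqQ, hne⟩
        by_cases h : q ∈ s
        · refine Finset.mem_erase.2 ⟨?_, h⟩
          intro heq
          apply hne
          rw [heq]
          simp only [hw'_def, if_pos hq₀s, sub_self]
          exact sub_self _
        · exact absurd (by simp only [hw'_def, if_neg h]) hne
      have hcard' : (Q.filter (fun q => w' q ≠ 0)).card ≤ k := by
        have h1 := Finset.card_le_card hsupp
        have h2 : (s.erase q₀).card = s.card - 1 := Finset.card_erase_of_mem hq₀s
        have h3 : s.card ≤ k + 1 := hcard
        have h4 : 1 ≤ s.card := Finset.card_pos.2 hsne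
        omega
      have hIH := ih w' (M - msm) (by linarith) hw'bound hcard'
      have hsub : s ⊆ Q := Finset.filter_subset _ _
      have hQs : Q ∩ s = s := Finset.inter_eq_right.2 hsub
      have hdecomp : ∀ q ∈ Q, w q = w' q + (if q ∈ s then msm else 0) := by
        intro q hq
        by_cases h : q ∈ s
        · simp [hw'_def, if_pos h]
        · have hq0 : w q = 0 := by
            by_contra hne; exact h (Finset.mem_filter.2 ⟨hq, hne⟩)
          simp [hw'_def, if_neg h, hq0]
      have hsum1 : ∑ q ∈ Q, ν q * w q
          = (∑ q ∈ Q, ν q * w' q) + msm * ∑ q ∈ s, ν q := by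
        have hc : ∀ q ∈ Q, ν q * w q = ν q * w' q + (if q ∈ s then ν q * msm else 0) := by
          intro q hq
          rw [hdecomp q hq]
          by_cases h : q ∈ s <;> simp [h] <;> ring
        rw [Finset.sum_congr rfl hc, Finset.sum_add_distrib]
        congr 1
        rw [Finset.sum_ite_mem, hQs, Finset.mul_sum]
        exact Finset.sum_congr rfl fun q _ => mul_comm _ _
      have hsum2 : ∑ q ∈ Q, w q = (∑ q ∈ Q, w' q) + msm * s.card := by
        rw [Finset.sum_congr rfl hdecomp, Finset.sum_add_distrib]
        congr 1
        rw [Finset.sum_ite_mem, hQs, Finset.sum_const, nsmul_eq_mul]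
        ring
      have h5 : ∑ q ∈ s, ν q ≤ ((s.card : ℝ) + 1) * N := hpart s hsub
      have h6 : msm * ∑ q ∈ s, ν q ≤ msm * (((s.card : ℝ) + 1) * N) :=
        mul_le_mul_of_nonneg_left h5 (le_of_lt hm_pos)
      have h7 : ∑ q ∈ Q, w' q = (∑ q ∈ Q, w q) - msm * s.card := by linarith
      rw [hsum1]
      calc (∑ q ∈ Q, ν q * w' q) + msm * ∑ q ∈ s, ν q
          ≤ N * (((∑ q ∈ Q, w q) - msm * s.card) + (M - msm)) + msm * (((s.card : ℝ) + 1) * N) := by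
            rw [h7] at hIH; linarith
        _ = N * ((∑ q ∈ Q, w q) + M) := by ring


lemma star_bound (x s T dR : ℝ) (hd : 2 ≤ dR) (hs : s^2 ≤ dR*T) :
    (dR-1)*(dR*x^2 - 2*x*s + T) ≤ dR^2*x^2 + dR*(dR-1)*T := by
  nlinarith [sq_nonneg (dR*x + (dR-1)*s), mul_nonneg (sq_nonneg (dR-1)) (by linarith : (0:ℝ) ≤ dR*T - s^2)]

lemma graph_lemma {n : ℕ} (F : Finset (Fin n × Fin n)) :
    (∀ e ∈ F, e.1 < e.2) → ∀ lam : Fin n → ℝ,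
    ∑ e ∈ F, (lam e.1 - lam e.2)^2 ≤ ((F.card : ℝ) + 1) * ∑ i, (lam i)^2 := by
  induction F using Finset.strongInductionOn with
  | _ F ih =>
  intro hF lam
  have hL0 : (0:ℝ) ≤ ∑ i, (lam i)^2 := Finset.sum_nonneg fun i _ => sq_nonneg _
  rcases F.eq_empty_or_nonempty with hFe | hFne
  · subst hFe; simp; linarith
  obtain ⟨e₀, he₀⟩ := hFne
  -- degree function
  set deg : Fin n → ℕ := fun u => (F.filter (fun e => e.1 = u ∨ e.2 = u)).card with hdeg_def
  obtain ⟨v, _, hvmax⟩ := Finset.exists_max_image Finset.univ deg ⟨e₀.1, Finset.mem_univ _⟩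
  set Fv := F.filter (fun e => e.1 = v ∨ e.2 = v) with hFv_def
  set F' := F.filter (fun e => ¬(e.1 = v ∨ e.2 = v)) with hF'_def
  set d := Fv.card with hd_def
  have hdv : deg v = d := rfl
  have hd1 : 1 ≤ deg e₀.1 := by
    have : e₀ ∈ F.filter (fun e => e.1 = e₀.1 ∨ e.2 = e₀.1) :=
      Finset.mem_filter.2 ⟨he₀, Or.inl rfl⟩
    have hne : (F.filter (fun e => e.1 = e₀.1 ∨ e.2 = e₀.1)).Nonempty := ⟨e₀, this⟩
    exact Finset.card_pos.2 hne
  have hd1' : 1 ≤ d := le_trans hd1 (by rw [← hdv]; exact hvmax e₀.1 (Finset.mem_univ _))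
  have hsplit : ∑ e ∈ Fv, (lam e.1 - lam e.2)^2 + ∑ e ∈ F', (lam e.1 - lam e.2)^2
      = ∑ e ∈ F, (lam e.1 - lam e.2)^2 :=
    Finset.sum_filter_add_sum_filter_not F _ _
  have hcardsplit : d + F'.card = F.card := by
    rw [hd_def, hFv_def, hF'_def]
    exact Finset.card_filter_add_card_filter_not _
  -- case: max degree 1 (matching)
  by_cases hdone : deg v = 1
  · have hdegle : ∀ u, deg u ≤ 1 := fun u => le_trans (hvmax u (Finset.mem_univ _)) (le_of_eq hdone)
    have hedge : ∀ e ∈ F, (lam e.1 - lam e.2)^2 ≤ 2*(lam e.1)^2 + 2*(lam e.2)^2 := by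
      intro e _; nlinarith [sq_nonneg (lam e.1 + lam e.2)]
    have hsum : ∑ e ∈ F, (lam e.1 - lam e.2)^2 ≤ ∑ e ∈ F, (2*(lam e.1)^2 + 2*(lam e.2)^2) :=
      Finset.sum_le_sum hedge
    have hdc : ∑ e ∈ F, ((lam e.1)^2 + (lam e.2)^2) = ∑ u, (deg u : ℝ) * (lam u)^2 := by
      have hpt : ∀ e ∈ F, (lam e.1)^2 + (lam e.2)^2
          = ∑ u, (if e.1 = u ∨ e.2 = u then (lam u)^2 else 0) := by
        intro e he
        have hne : e.1 ≠ e.2 := ne_of_lt (hF e he)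
        have hsplitite : ∀ u : Fin n, (if e.1 = u ∨ e.2 = u then (lam u)^2 else 0)
            = (if e.1 = u then (lam u)^2 else 0) + (if e.2 = u then (lam u)^2 else 0) := by
          intro u
          by_cases h1 : e.1 = u <;> by_cases h2 : e.2 = u
          · exact absurd (h1.trans h2.symm) hne
          · simp [h1, h2]
          · simp [h1, h2]
          · simp [h1, h2]
        rw [Finset.sum_congr rfl (fun u _ => hsplitite u), Finset.sum_add_distrib,
          Finset.sum_ite_eq Finset.univ e.1 (fun u => (lam u)^2),
          Finset.sum_ite_eq Finset.univ e.2 (fun u => (lam u)^2)]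
        simp
      rw [Finset.sum_congr rfl hpt, Finset.sum_comm]
      congr 1; ext u
      rw [← Finset.sum_filter]
      rw [Finset.sum_const, nsmul_eq_mul]
    have hdegsum : ∑ u, (deg u : ℝ) * (lam u)^2 ≤ ∑ u, (lam u)^2 := by
      apply Finset.sum_le_sum
      intro u _
      have h1 : (deg u : ℝ) ≤ 1 := by exact_mod_cast hdegle u
      nlinarith [sq_nonneg (lam u)]
    have hm1 : (1:ℝ) ≤ F.card := by exact_mod_cast Finset.card_pos.2 ⟨e₀, he₀⟩
    have : ∑ e ∈ F, (2*(lam e.1)^2 + 2*(lam e.2)^2) = 2 * ∑ e ∈ F, ((lam e.1)^2 + (lam e.2)^2) := by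
      rw [Finset.mul_sum]; congr 1; ext e; ring
    rw [this, hdc] at hsum
    calc ∑ e ∈ F, (lam e.1 - lam e.2)^2 ≤ 2 * ∑ u, (deg u : ℝ) * (lam u)^2 := hsum
      _ ≤ 2 * ∑ i, (lam i)^2 := by linarith
      _ ≤ ((F.card : ℝ) + 1) * ∑ i, (lam i)^2 := by nlinarith
  -- now max degree d ≥ 2
  have hd2 : 2 ≤ d := by
    have hne : d ≠ 1 := fun h => hdone (hdv.trans h)
    omega
  -- the "other endpoint" map
  set o : (Fin n × Fin n) → Fin n := fun e => if e.1 = v then e.2 else e.1 with ho_def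
  have hchar : ∀ e ∈ Fv, (e.1 = v ∧ o e = e.2 ∧ v < o e) ∨ (e.2 = v ∧ o e = e.1 ∧ o e < v) := by
    intro e he
    rcases Finset.mem_filter.1 he with ⟨heF, hor⟩
    rcases hor with h1 | h2
    · left
      refine ⟨h1, by simp [ho_def, h1], ?_⟩
      have := hF e heF
      simp only [ho_def, if_pos h1]
      rw [← h1]; exact this
    · by_cases h1 : e.1 = v
      · left
        refine ⟨h1, by simp [ho_def, h1], ?_⟩
        have := hF e heF
        simp only [ho_def, if_pos h1]
        rw [← h1]; exact this
      · right
        refine ⟨h2, by simp [ho_def, h1], ?_⟩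
        have := hF e heF
        simp only [ho_def, if_neg h1]
        rw [← h2]; exact this
  have honev : ∀ e ∈ Fv, o e ≠ v := by
    intro e he
    rcases hchar e he with ⟨_, _, h⟩ | ⟨_, _, h⟩
    · exact ne_of_gt h
    · exact ne_of_lt h
  have hinj : ∀ e ∈ Fv, ∀ e' ∈ Fv, o e = o e' → e = e' := by
    intro e he e' he' hoe
    rcases hchar e he with ⟨h1, h2, h3⟩ | ⟨h1, h2, h3⟩ <;>
      rcases hchar e' he' with ⟨h1', h2', h3'⟩ | ⟨h1', h2', h3'⟩
    · apply Prod.ext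
      · rw [h1, h1']
      · rw [← h2, ← h2', hoe]
    · exfalso; rw [hoe] at h3; exact lt_asymm h3 h3'
    · exfalso; rw [hoe] at h3; exact lt_asymm h3' h3
    · apply Prod.ext
      · rw [← h2, ← h2', hoe]
      · rw [h1, h1']
  have hsq : ∀ e ∈ Fv, (lam e.1 - lam e.2)^2 = (lam v - lam (o e))^2 := by
    intro e he
    rcases hchar e he with ⟨h1, h2, _⟩ | ⟨h1, h2, _⟩
    · rw [h1, h2]
    · rw [h1, h2]; ring
  set s := ∑ e ∈ Fv, lam (o e) with hs_def
  set T := ∑ e ∈ Fv, (lam (o e))^2 with hT_def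
  have hstar : ∑ e ∈ Fv, (lam e.1 - lam e.2)^2 = (d:ℝ)*(lam v)^2 - 2*(lam v)*s + T := by
    rw [Finset.sum_congr rfl hsq]
    have hexp : ∀ e ∈ Fv, (lam v - lam (o e))^2
        = (lam v)^2 - 2*(lam v)*(lam (o e)) + (lam (o e))^2 := by intro e _; ring
    rw [Finset.sum_congr rfl hexp]
    rw [Finset.sum_add_distrib, Finset.sum_sub_distrib, Finset.sum_const, nsmul_eq_mul,
      ← Finset.mul_sum]
  have hCS : s^2 ≤ (d:ℝ) * T := by
    have h := Finset.sum_mul_sq_le_sq_mul_sq Fv (fun _ => (1:ℝ)) (fun e => lam (o e))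
    simp only [one_mul, one_pow] at h
    rw [Finset.sum_const, nsmul_eq_mul, mul_one] at h
    exact h
  set lam' := Function.update lam v 0 with hlam'_def
  have hlam'v : lam' v = 0 := Function.update_self v 0 lam
  have hlam'ne : ∀ u, u ≠ v → lam' u = lam u := fun u hu => Function.update_of_ne hu 0 lam
  have hTle : T ≤ ∑ i, (lam' i)^2 := by
    have h1 : T = ∑ e ∈ Fv, (lam' (o e))^2 := by
      apply Finset.sum_congr rfl
      intro e he
      rw [hlam'ne (o e) (honev e he)]
    rw [h1, ← Finset.sum_image (f := fun u => (lam' u)^2) hinj]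
    apply Finset.sum_le_sum_of_subset_of_nonneg (Finset.subset_univ _)
    intro i _ _
    exact sq_nonneg _
  have hLsplit : ∑ i, (lam' i)^2 = (∑ i, (lam i)^2) - (lam v)^2 := by
    have hpt : ∀ i : Fin n, (lam' i)^2 = (lam i)^2 - (if i = v then (lam i)^2 else 0) := by
      intro i
      by_cases h : i = v
      · rw [h, hlam'v]; simp
      · rw [hlam'ne i h]; simp [h]
    rw [Finset.sum_congr rfl (fun i _ => hpt i), Finset.sum_sub_distrib]
    congr 1
    rw [Finset.sum_ite_eq' Finset.univ v (fun i => (lam i)^2)]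
    simp
  have hT0 : 0 ≤ T := Finset.sum_nonneg fun e _ => sq_nonneg _
  have hL'0 : (0:ℝ) ≤ ∑ i, (lam' i)^2 := Finset.sum_nonneg fun i _ => sq_nonneg _
  -- F' avoids v
  have hF'sum : ∑ e ∈ F', (lam e.1 - lam e.2)^2 = ∑ e ∈ F', (lam' e.1 - lam' e.2)^2 := by
    apply Finset.sum_congr rfl
    intro e he
    rcases Finset.mem_filter.1 he with ⟨_, hnor⟩
    push_neg at hnor
    rw [hlam'ne e.1 hnor.1, hlam'ne e.2 hnor.2]
  have hFvne : Fv.Nonempty := Finset.card_pos.1 (by omega)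
  have hF'ss : F' ⊂ F := by
    rw [hF'_def]
    rw [Finset.filter_ssubset]
    obtain ⟨e, he⟩ := hFvne
    rcases Finset.mem_filter.1 he with ⟨heF, hor⟩
    exact ⟨e, heF, not_not_intro hor⟩
  have hIH := ih F' hF'ss (fun e he => hF e (Finset.filter_subset _ _ he)) lam'
  rw [hF'sum] at hsplit
  rw [← hsplit]
  -- two subcases
  by_cases hFe' : F'.card = 0
  · -- F = Fv, star only
    have hF'empty : F' = ∅ := Finset.card_eq_zero.1 hFe'
    rw [hF'empty]
    simp only [Finset.sum_empty, add_zero]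
    have hb1 : -2*(lam v)*s ≤ (lam v)^2 + s^2 := by nlinarith [sq_nonneg (lam v + s)]
    have hmc : (F.card : ℝ) = (d : ℝ) := by
      have : F.card = d := by omega
      rw [this]
    rw [hstar, hmc]
    have hdR : (2:ℝ) ≤ (d:ℝ) := by exact_mod_cast hd2
    calc (d:ℝ)*(lam v)^2 - 2*(lam v)*s + T
        ≤ (d:ℝ)*(lam v)^2 + ((lam v)^2 + s^2) + T := by linarith
      _ ≤ ((d:ℝ)+1)*(lam v)^2 + ((d:ℝ)+1)*T := by nlinarith
      _ ≤ ((d:ℝ)+1)*(lam v)^2 + ((d:ℝ)+1)*(∑ i, (lam' i)^2) := by nlinarith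
      _ = ((d:ℝ)+1)*((lam v)^2 + ∑ i, (lam' i)^2) := by ring
      _ = ((d:ℝ)+1)*(∑ i, (lam i)^2) := by rw [hLsplit]; ring
  · -- general: use epsilon trick
    have hcR1 : (1:ℝ) ≤ (F'.card : ℝ) := by
      have : 1 ≤ F'.card := by omega
      exact_mod_cast this
    have hdR : (2:ℝ) ≤ (d:ℝ) := by exact_mod_cast hd2
    have hdm1 : (0:ℝ) < (d:ℝ) - 1 := by linarith
    have hsb := star_bound (lam v) s T (d:ℝ) hdR hCS
    have hstarle : (d:ℝ)*(lam v)^2 - 2*(lam v)*s + T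
        ≤ ((d:ℝ)^2/((d:ℝ)-1))*(lam v)^2 + (d:ℝ)*T := by
      have h2 : ((d:ℝ)^2*(lam v)^2 + (d:ℝ)*((d:ℝ)-1)*T)/((d:ℝ)-1)
          = ((d:ℝ)^2/((d:ℝ)-1))*(lam v)^2 + (d:ℝ)*T := by
        field_simp
      rw [← h2, le_div_iff₀ hdm1]
      nlinarith [hsb]
    have hcoef : ((d:ℝ)^2/((d:ℝ)-1)) ≤ (F.card : ℝ) + 1 := by
      rw [div_le_iff₀ hdm1]
      have hmcast : (F.card : ℝ) = (d:ℝ) + (F'.card : ℝ) := by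
        have := hcardsplit
        push_cast [← this]
        ring
      rw [hmcast]
      nlinarith
    have hmge : (d:ℝ) + (F'.card : ℝ) + 1 = (F.card : ℝ) + 1 := by
      have := hcardsplit
      push_cast [← this]
      ring
    rw [hstar]
    calc (d:ℝ)*(lam v)^2 - 2*(lam v)*s + T + ∑ e ∈ F', (lam' e.1 - lam' e.2)^2
        ≤ ((d:ℝ)^2/((d:ℝ)-1))*(lam v)^2 + (d:ℝ)*T + ((F'.card:ℝ)+1)*(∑ i, (lam' i)^2) := by
          linarith [hIH]
      _ ≤ ((F.card:ℝ)+1)*(lam v)^2 + (d:ℝ)*(∑ i, (lam' i)^2) + ((F'.card:ℝ)+1)*(∑ i, (lam' i)^2) := by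
          have h1 : ((d:ℝ)^2/((d:ℝ)-1))*(lam v)^2 ≤ ((F.card:ℝ)+1)*(lam v)^2 :=
            mul_le_mul_of_nonneg_right hcoef (sq_nonneg _)
          have h2 : (d:ℝ)*T ≤ (d:ℝ)*(∑ i, (lam' i)^2) :=
            mul_le_mul_of_nonneg_left hTle (by linarith)
          linarith
      _ = ((F.card:ℝ)+1)*(lam v)^2 + ((d:ℝ) + (F'.card:ℝ) + 1)*(∑ i, (lam' i)^2) := by ring
      _ = ((F.card:ℝ)+1)*(lam v)^2 + ((F.card:ℝ)+1)*(∑ i, (lam' i)^2) := by rw [hmge]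
      _ = ((F.card:ℝ)+1)*((lam v)^2 + ∑ i, (lam' i)^2) := by ring
      _ = ((F.card:ℝ)+1)*(∑ i, (lam i)^2) := by rw [hLsplit]; ring

lemma ip_zero_right {m : Type*} [Fintype m] (x : Matrix m m ℝ) : ip x (0 : Matrix m m ℝ) = 0 := by
  simp [ip]

lemma bessel {m : Type*} [Fintype m] {ι : Type*} [DecidableEq ι] (s : Finset ι)
    (v : ι → Matrix m m ℝ)
    (horth : ∀ a ∈ s, ∀ b ∈ s, a ≠ b → ip (v a) (v b) = 0)
    (x : Matrix m m ℝ) (M : ℝ) (hM0 : 0 ≤ M) (hM : ∀ a ∈ s, ip (v a) (v a) ≤ M) :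
    ∑ a ∈ s, (ip x (v a))^2 ≤ M * ip x x := by
  classical
  set c : ι → ℝ := fun a => if ip (v a) (v a) = 0 then 0 else ip x (v a) / ip (v a) (v a) with hc_def
  set z := ∑ a ∈ s, c a • v a with hz_def
  have h1 : ip x z = ∑ a ∈ s, c a * ip x (v a) := by
    rw [hz_def, ip_sum_right]
    exact Finset.sum_congr rfl fun a _ => ip_smul_right _ _ _
  have h2 : ip z z = ∑ a ∈ s, c a * ip x (v a) := by
    rw [hz_def, ip_sum_left]
    apply Finset.sum_congr rfl
    intro a ha
    rw [ip_smul_left, ip_sum_right]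
    have hsingle : ∑ b ∈ s, ip (v a) (c b • v b) = c a * ip (v a) (v a) := by
      rw [Finset.sum_eq_single_of_mem a ha]
      · rw [ip_smul_right]
      · intro b hb hne
        rw [ip_smul_right, horth a ha b hb (Ne.symm hne), mul_zero]
    rw [hsingle]
    by_cases h : ip (v a) (v a) = 0
    · simp [hc_def, h]
    · rw [hc_def]
      simp only [if_neg h]
      rw [div_mul_cancel₀ _ h]
  have h4 : 0 ≤ ip (x - z) (x - z) := nsq_nonneg (x - z)
  have h5 : ip (x - z) (x - z) = ip x x - 2 * ip x z + ip z z := by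
    rw [ip_sub_left, ip_sub_right, ip_sub_right, ip_comm z x]
    ring
  have h6 : ∑ a ∈ s, c a * ip x (v a) ≤ ip x x := by
    rw [h5, h1, h2] at h4; linarith
  have h7 : ∀ a ∈ s, (ip x (v a))^2 ≤ M * (c a * ip x (v a)) := by
    intro a ha
    by_cases h : ip (v a) (v a) = 0
    · have hv0 : v a = 0 := ip_self_eq_zero h
      rw [hv0, ip_zero_right]
      simp [hc_def, h]
    · have hpos : 0 < ip (v a) (v a) := lt_of_le_of_ne (nsq_nonneg (v a)) (Ne.symm h)
      have hcval : c a * ip x (v a) = (ip x (v a))^2 / ip (v a) (v a) := by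
        rw [hc_def]; simp only [if_neg h]; field_simp
      rw [hcval]
      have hnn : 0 ≤ (ip x (v a))^2 / ip (v a) (v a) := div_nonneg (sq_nonneg _) (le_of_lt hpos)
      have hkey : M * ((ip x (v a))^2 / ip (v a) (v a)) - (ip x (v a))^2
          = (M - ip (v a) (v a)) * ((ip x (v a))^2 / ip (v a) (v a)) := by
        field_simp
      have hprod := mul_nonneg (sub_nonneg.2 (hM a ha)) hnn
      linarith
  calc ∑ a ∈ s, (ip x (v a))^2 ≤ ∑ a ∈ s, M * (c a * ip x (v a)) := Finset.sum_le_sum h7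
    _ = M * ∑ a ∈ s, c a * ip x (v a) := by rw [Finset.mul_sum]
    _ ≤ M * ip x x := mul_le_mul_of_nonneg_left h6 hM0

lemma pair_sum {n : ℕ} (f : Fin n → Fin n → ℝ) (hf : ∀ i j, f i j = f j i)
    (hdiag : ∀ i, f i i = 0) :
    ∑ i, ∑ j, f i j
      = ∑ e ∈ (Finset.univ ×ˢ Finset.univ).filter (fun e : Fin n × Fin n => e.1 < e.2),
          2 * f e.1 e.2 := by
  classical
  have h0 : ∑ i, ∑ j, f i j = ∑ e ∈ Finset.univ ×ˢ Finset.univ, f e.1 e.2 :=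
    (Finset.sum_product' Finset.univ Finset.univ (fun i j => f i j)).symm
  set P := (Finset.univ ×ˢ Finset.univ : Finset (Fin n × Fin n)) with hP_def
  set A := P.filter (fun e : Fin n × Fin n => e.1 < e.2) with hA_def
  have hsplit1 : ∑ e ∈ P, f e.1 e.2
      = ∑ e ∈ A, f e.1 e.2 + ∑ e ∈ P.filter (fun e => ¬ e.1 < e.2), f e.1 e.2 :=
    (Finset.sum_filter_add_sum_filter_not P _ _).symm
  have hsplit2 : ∑ e ∈ P.filter (fun e => ¬ e.1 < e.2), f e.1 e.2
      = ∑ e ∈ (P.filter (fun e => ¬ e.1 < e.2)).filter (fun e => e.2 < e.1), f e.1 e.2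
        + ∑ e ∈ (P.filter (fun e => ¬ e.1 < e.2)).filter (fun e => ¬ e.2 < e.1), f e.1 e.2 :=
    (Finset.sum_filter_add_sum_filter_not _ _ _).symm
  have hBeq : (P.filter (fun e => ¬ e.1 < e.2)).filter (fun e : Fin n × Fin n => e.2 < e.1)
      = P.filter (fun e : Fin n × Fin n => e.2 < e.1) := by
    rw [Finset.filter_filter]
    apply Finset.filter_congr
    intro e _
    constructor
    · intro h; exact h.2
    · intro h; exact ⟨not_lt_of_gt h, h⟩
  have hdiag0 : ∑ e ∈ (P.filter (fun e => ¬ e.1 < e.2)).filter (fun e => ¬ e.2 < e.1), f e.1 e.2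
      = 0 := by
    apply Finset.sum_eq_zero
    intro e he
    rcases Finset.mem_filter.1 he with ⟨he1, hn2⟩
    rcases Finset.mem_filter.1 he1 with ⟨_, hn1⟩
    have heq : e.1 = e.2 := le_antisymm (not_lt.1 hn2) (not_lt.1 hn1)
    rw [heq, hdiag]
  have hmirror : ∑ e ∈ P.filter (fun e : Fin n × Fin n => e.2 < e.1), f e.1 e.2
      = ∑ e ∈ A, f e.1 e.2 := by
    apply Finset.sum_nbij' (fun e => Prod.swap e) (fun e => Prod.swap e)
    · intro e he
      rcases Finset.mem_filter.1 he with ⟨_, hlt⟩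
      exact Finset.mem_filter.2 ⟨Finset.mem_product.2 ⟨Finset.mem_univ _, Finset.mem_univ _⟩, hlt⟩
    · intro e he
      rcases Finset.mem_filter.1 he with ⟨_, hlt⟩
      exact Finset.mem_filter.2 ⟨Finset.mem_product.2 ⟨Finset.mem_univ _, Finset.mem_univ _⟩, hlt⟩
    · intro e _; exact Prod.swap_swap e
    · intro e _; exact Prod.swap_swap e
    · intro e _; exact hf e.1 e.2
  have hdouble : ∑ e ∈ A, 2 * f e.1 e.2 = ∑ e ∈ A, f e.1 e.2 + ∑ e ∈ A, f e.1 e.2 := by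
    rw [← Finset.sum_add_distrib]
    exact Finset.sum_congr rfl fun e _ => by ring
  rw [h0, hsplit1, hsplit2, hBeq, hdiag0, hmirror, hdouble]
  ring

def unitm {n : ℕ} (i j : Fin n) : Matrix (Fin n) (Fin n) ℝ :=
  Matrix.of fun a b => if a = i ∧ b = j then 1 else 0

lemma ip_unitm {n : ℕ} (i j : Fin n) (Y : Matrix (Fin n) (Fin n) ℝ) :
    ip (unitm i j) Y = Y i j := by
  unfold ip unitm
  have h : ∀ a b : Fin n, (Matrix.of fun a b => if a = i ∧ b = j then (1:ℝ) else 0) a b * Y a b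
      = if a = i then (if b = j then Y i j else 0) else 0 := by
    intro a b
    by_cases h1 : a = i <;> by_cases h2 : b = j <;> simp [Matrix.of_apply, h1, h2]
  simp only [h]
  simp [Finset.sum_ite_eq']

lemma unitm_apply_self {n : ℕ} (i j : Fin n) : unitm i j i j = 1 := by
  simp [unitm, Matrix.of_apply]

lemma unitm_apply_ne {n : ℕ} (i j a b : Fin n) (h : ¬(a = i ∧ b = j)) : unitm i j a b = 0 := by
  simp only [unitm, Matrix.of_apply, if_neg h]

lemma lu_diag {n : ℕ} {ι : Type*} [DecidableEq ι] (s : Finset ι) (lam : Fin n → ℝ)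
    (C : ι → Matrix (Fin n) (Fin n) ℝ)
    (hsym : ∀ δ ∈ s, (C δ)ᵀ = C δ)
    (horth : ∀ a ∈ s, ∀ b ∈ s, a ≠ b → ip (C a) (C b) = 0)
    (M : ℝ) (hM0 : 0 ≤ M) (hM : ∀ δ ∈ s, nsq (C δ) ≤ M) :
    ∑ δ ∈ s, nsq (comm (Matrix.diagonal lam) (C δ))
      ≤ (∑ i, (lam i)^2) * ((∑ δ ∈ s, nsq (C δ)) + M) := by
  classical
  set Q := (Finset.univ ×ˢ Finset.univ).filter (fun e : Fin n × Fin n => e.1 < e.2) with hQ_def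
  set ν : Fin n × Fin n → ℝ := fun e => (lam e.1 - lam e.2)^2 with hν_def
  set w : Fin n × Fin n → ℝ := fun e => 2 * ∑ δ ∈ s, (C δ e.1 e.2)^2 with hw_def
  have hsymC : ∀ δ ∈ s, ∀ i j : Fin n, C δ i j = C δ j i := by
    intro δ hδ i j
    have h := congrFun (congrFun (hsym δ hδ) j) i
    simpa using h
  have hcomm : ∀ δ ∈ s, nsq (comm (Matrix.diagonal lam) (C δ))
      = ∑ e ∈ Q, ν e * (2 * (C δ e.1 e.2)^2) := by
    intro δ hδ
    have hentry : ∀ i j : Fin n, comm (Matrix.diagonal lam) (C δ) i j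
        = (lam i - lam j) * C δ i j := by
      intro i j
      simp only [comm, Matrix.sub_apply, Matrix.diagonal_mul, Matrix.mul_diagonal]
      ring
    have h1 : nsq (comm (Matrix.diagonal lam) (C δ)) = ∑ i, ∑ j, ((lam i - lam j) * C δ i j)^2 := by
      unfold nsq ip
      congr 1; ext i; congr 1; ext j
      rw [hentry i j]; ring
    rw [h1]
    have hfsym : ∀ i j : Fin n, ((lam i - lam j) * C δ i j)^2 = ((lam j - lam i) * C δ j i)^2 := by
      intro i j; rw [hsymC δ hδ i j]; ring
    have hfd : ∀ i : Fin n, ((lam i - lam i) * C δ i i)^2 = 0 := by intro i; simp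
    rw [pair_sum (fun i j => ((lam i - lam j) * C δ i j)^2) hfsym hfd, ← hQ_def]
    apply Finset.sum_congr rfl
    intro e _
    rw [hν_def]; ring
  have htot : ∑ δ ∈ s, nsq (comm (Matrix.diagonal lam) (C δ)) = ∑ e ∈ Q, ν e * w e := by
    rw [Finset.sum_congr rfl hcomm, Finset.sum_comm]
    apply Finset.sum_congr rfl
    intro e _
    rw [hw_def]
    simp only []
    rw [← Finset.mul_sum, ← Finset.mul_sum]
  have hcap : ∀ e ∈ Q, 0 ≤ w e ∧ w e ≤ M := by
    intro e heQ
    rcases Finset.mem_filter.1 heQ with ⟨_, hlt⟩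
    have hne : e.1 ≠ e.2 := ne_of_lt hlt
    constructor
    · rw [hw_def]
      simp only []
      have : (0:ℝ) ≤ ∑ δ ∈ s, (C δ e.1 e.2)^2 := Finset.sum_nonneg fun δ _ => sq_nonneg _
      linarith
    · set x := unitm e.1 e.2 + unitm e.2 e.1 with hx_def
      have hipx : ∀ Y, ip x Y = Y e.1 e.2 + Y e.2 e.1 := by
        intro Y
        rw [hx_def, ip_add_left, ip_unitm, ip_unitm]
      have hx12 : x e.1 e.2 = 1 := by
        rw [hx_def, Matrix.add_apply, unitm_apply_self,
          unitm_apply_ne e.2 e.1 e.1 e.2 (fun h => hne h.1)]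
        norm_num
      have hx21 : x e.2 e.1 = 1 := by
        rw [hx_def, Matrix.add_apply, unitm_apply_self,
          unitm_apply_ne e.1 e.2 e.2 e.1 (fun h => hne h.1.symm)]
        norm_num
      have hxx : ip x x = 2 := by
        rw [hipx x, hx12, hx21]; norm_num
      have hb := bessel s C horth x M hM0 hM
      have h1 : ∀ δ ∈ s, (ip x (C δ))^2 = 4 * (C δ e.1 e.2)^2 := by
        intro δ hδ
        rw [hipx, hsymC δ hδ e.2 e.1]
        ring
      rw [hxx, Finset.sum_congr rfl h1] at hb
      rw [hw_def]
      simp only []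
      rw [← Finset.mul_sum] at hb
      linarith
  have hN0 : (0:ℝ) ≤ ∑ i, (lam i)^2 := Finset.sum_nonneg fun i _ => sq_nonneg _
  have hpart : ∀ F ⊆ Q, ∑ e ∈ F, ν e ≤ ((F.card:ℝ)+1) * ∑ i, (lam i)^2 := by
    intro F hFQ
    refine graph_lemma F ?_ lam
    intro e he
    have hm := hFQ he
    rw [hQ_def] at hm
    exact (Finset.mem_filter.1 hm).2
  have hknap := knapsack Q ν _ hN0 hpart Q.card w M hM0 hcap (Finset.card_filter_le _ _)
  have hbud : ∑ e ∈ Q, w e ≤ ∑ δ ∈ s, nsq (C δ) := by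
    have hgsym : ∀ i j : Fin n, (if i = j then (0:ℝ) else ∑ δ ∈ s, (C δ i j)^2)
        = (if j = i then (0:ℝ) else ∑ δ ∈ s, (C δ j i)^2) := by
      intro i j
      by_cases h : i = j
      · rw [if_pos h, if_pos h.symm]
      · rw [if_neg h, if_neg (Ne.symm h)]
        exact Finset.sum_congr rfl fun δ hδ => by rw [hsymC δ hδ i j]
    have hgd : ∀ i : Fin n, (if i = i then (0:ℝ) else ∑ δ ∈ s, (C δ i i)^2) = 0 := by
      intro i; rw [if_pos rfl]
    have h2 : ∑ e ∈ Q, w e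
        = ∑ i, ∑ j, (if i = j then 0 else ∑ δ ∈ s, (C δ i j)^2) := by
      rw [pair_sum (fun i j => if i = j then 0 else ∑ δ ∈ s, (C δ i j)^2) hgsym hgd, ← hQ_def]
      apply Finset.sum_congr rfl
      intro e he
      have hm := he
      rw [hQ_def] at hm
      have hlt := (Finset.mem_filter.1 hm).2
      rw [hw_def, if_neg (ne_of_lt hlt)]
    rw [h2]
    have h3 : ∀ i : Fin n, ∀ j : Fin n, (if i = j then (0:ℝ) else ∑ δ ∈ s, (C δ i j)^2)
        ≤ ∑ δ ∈ s, (C δ i j)^2 := by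
      intro i j
      by_cases h : i = j
      · rw [if_pos h]; exact Finset.sum_nonneg fun δ _ => sq_nonneg _
      · rw [if_neg h]
    have h4 : ∑ i, ∑ j, (if i = j then (0:ℝ) else ∑ δ ∈ s, (C δ i j)^2)
        ≤ ∑ i, ∑ j, ∑ δ ∈ s, (C δ i j)^2 :=
      Finset.sum_le_sum fun i _ => Finset.sum_le_sum fun j _ => h3 i j
    have h5 : ∑ i, ∑ j, ∑ δ ∈ s, (C δ i j)^2 = ∑ δ ∈ s, nsq (C δ) := by
      have hsw : ∀ i : Fin n, ∑ j, ∑ δ ∈ s, (C δ i j)^2 = ∑ δ ∈ s, ∑ j, (C δ i j)^2 :=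
        fun i => Finset.sum_comm
      rw [Finset.sum_congr rfl (fun i _ => hsw i), Finset.sum_comm]
      apply Finset.sum_congr rfl
      intro δ _
      unfold nsq ip
      apply Finset.sum_congr rfl; intro i _
      apply Finset.sum_congr rfl; intro j _
      ring
    linarith
  rw [htot]
  calc ∑ e ∈ Q, ν e * w e ≤ (∑ i, (lam i)^2) * ((∑ e ∈ Q, w e) + M) := hknap
    _ ≤ (∑ i, (lam i)^2) * ((∑ δ ∈ s, nsq (C δ)) + M) :=
      mul_le_mul_of_nonneg_left (by linarith) hN0


lemma nsq_diagonal {n : ℕ} (lam : Fin n → ℝ) : nsq (Matrix.diagonal lam) = ∑ i, (lam i)^2 := by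
  unfold nsq ip
  have h : ∀ i j : Fin n, Matrix.diagonal lam i j * Matrix.diagonal lam i j
      = if j = i then (lam i)^2 else 0 := by
    intro i j
    by_cases hij : i = j
    · subst hij; rw [Matrix.diagonal_apply_eq, if_pos rfl]; ring
    · rw [Matrix.diagonal_apply_ne _ hij, if_neg (Ne.symm hij)]; ring
  simp only [h]
  apply Finset.sum_congr rfl
  intro i _
  rw [Finset.sum_ite_eq' Finset.univ i (fun _ => (lam i)^2)]
  simp

lemma spectral_real {m' : Type*} [Fintype m'] [DecidableEq m'] (A : Matrix m' m' ℝ) (hA : Aᵀ = A) :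
    ∃ (U : Matrix m' m' ℝ) (lam : m' → ℝ),
      U * Uᵀ = 1 ∧ Uᵀ * U = 1 ∧ Uᵀ * A * U = Matrix.diagonal lam := by
  have hH : A.IsHermitian := hA
  have hstar : star (hH.eigenvectorUnitary : Matrix m' m' ℝ)
      = (hH.eigenvectorUnitary : Matrix m' m' ℝ)ᵀ := rfl
  have hUUt : (hH.eigenvectorUnitary : Matrix m' m' ℝ)
      * (hH.eigenvectorUnitary : Matrix m' m' ℝ)ᵀ = 1 := by
    rw [← hstar]
    exact Matrix.mem_unitaryGroup_iff.1 hH.eigenvectorUnitary.2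
  have hUtU : (hH.eigenvectorUnitary : Matrix m' m' ℝ)ᵀ
      * (hH.eigenvectorUnitary : Matrix m' m' ℝ) = 1 := by
    rw [← hstar]
    exact Matrix.UnitaryGroup.star_mul_self hH.eigenvectorUnitary
  refine ⟨(hH.eigenvectorUnitary : Matrix m' m' ℝ), hH.eigenvalues, hUUt, hUtU, ?_⟩
  have h3 := hH.spectral_theorem
  have hofreal : Matrix.diagonal (RCLike.ofReal ∘ hH.eigenvalues) = Matrix.diagonal hH.eigenvalues := rfl
  rw [hofreal, Unitary.conjStarAlgAut_apply] at h3
  have h4 := congrArg (fun X => (hH.eigenvectorUnitary : Matrix m' m' ℝ)ᵀ * X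
      * (hH.eigenvectorUnitary : Matrix m' m' ℝ)) h3
  beta_reduce at h4
  rw [hstar] at h4
  rw [h4]
  have hassoc : (hH.eigenvectorUnitary : Matrix m' m' ℝ)ᵀ
      * ((hH.eigenvectorUnitary : Matrix m' m' ℝ) * Matrix.diagonal hH.eigenvalues
        * (hH.eigenvectorUnitary : Matrix m' m' ℝ)ᵀ)
      * (hH.eigenvectorUnitary : Matrix m' m' ℝ)
      = ((hH.eigenvectorUnitary : Matrix m' m' ℝ)ᵀ
          * (hH.eigenvectorUnitary : Matrix m' m' ℝ)) * Matrix.diagonal hH.eigenvalues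
        * ((hH.eigenvectorUnitary : Matrix m' m' ℝ)ᵀ
          * (hH.eigenvectorUnitary : Matrix m' m' ℝ)) := by
    simp only [Matrix.mul_assoc]
  rw [hassoc, hUtU, Matrix.one_mul, Matrix.mul_one]

lemma lu {n : ℕ} {ι : Type*} [DecidableEq ι] (s : Finset ι)
    (A : Matrix (Fin n) (Fin n) ℝ) (hA : Aᵀ = A)
    (B : ι → Matrix (Fin n) (Fin n) ℝ) (hBsym : ∀ δ ∈ s, (B δ)ᵀ = B δ)
    (horth : ∀ a ∈ s, ∀ b ∈ s, a ≠ b → ip (B a) (B b) = 0)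
    (M : ℝ) (hM0 : 0 ≤ M) (hM : ∀ δ ∈ s, nsq (B δ) ≤ M) :
    ∑ δ ∈ s, nsq (comm A (B δ)) ≤ nsq A * ((∑ δ ∈ s, nsq (B δ)) + M) := by
  obtain ⟨U, lam, hUUt, hUtU, hdg⟩ := spectral_real A hA
  set Cm := fun δ => Uᵀ * B δ * U with hC_def
  have hconj : ∀ X Y, ip (Uᵀ * X * U) (Uᵀ * Y * U) = ip X Y := ip_conj U hUUt
  have h1 : ∀ δ ∈ s, nsq (comm A (B δ)) = nsq (comm (Matrix.diagonal lam) (Cm δ)) := by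
    intro δ hδ
    rw [← hdg, hC_def]
    simp only []
    rw [comm_conj U hUUt hUtU]
    unfold nsq
    rw [hconj]
  have h2 : ∀ δ ∈ s, nsq (Cm δ) = nsq (B δ) := by
    intro δ hδ
    unfold nsq
    rw [hC_def]
    exact hconj _ _
  have h3 : nsq A = ∑ i, (lam i)^2 := by
    rw [← nsq_diagonal lam, ← hdg]
    unfold nsq
    exact (hconj A A).symm
  have hCsym : ∀ δ ∈ s, (Cm δ)ᵀ = Cm δ := by
    intro δ hδ
    rw [hC_def]
    simp only []
    rw [Matrix.transpose_mul, Matrix.transpose_mul, Matrix.transpose_transpose, hBsym δ hδ,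
      Matrix.mul_assoc]
  have hCorth : ∀ a ∈ s, ∀ b ∈ s, a ≠ b → ip (Cm a) (Cm b) = 0 := by
    intro a ha b hb hne
    rw [hC_def]
    simp only []
    rw [hconj]
    exact horth a ha b hb hne
  have hCM : ∀ δ ∈ s, nsq (Cm δ) ≤ M := fun δ hδ => (h2 δ hδ) ▸ hM δ hδ
  have hmain := lu_diag s lam Cm hCsym hCorth M hM0 hCM
  have hs2 : ∑ δ ∈ s, nsq (Cm δ) = ∑ δ ∈ s, nsq (B δ) := Finset.sum_congr rfl h2
  rw [Finset.sum_congr rfl h1, h3, ← hs2]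
  exact hmain


lemma nsq_zero {m : Type*} [Fintype m] : nsq (0 : Matrix m m ℝ) = 0 := by
  simp [nsq, ip]

lemma LiLi_orth {n : ℕ} {ι : Type*} [Fintype ι] [DecidableEq ι]
    (B : ι → Matrix (Fin n) (Fin n) ℝ)
    (hsym : ∀ γ, (B γ)ᵀ = B γ)
    (horth : ∀ a b : ι, a ≠ b → ip (B a) (B b) = 0) :
    (∑ γ, ∑ δ, (ip (B γ) (B δ))^2) + (∑ γ, ∑ δ, nsq (comm (B γ) (B δ)))
      ≤ 3/2 * (∑ γ, nsq (B γ))^2 := by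
  classical
  set Nf : ι → ℝ := fun γ => nsq (B γ) with hN_def
  set σ : ℝ := ∑ γ, Nf γ with hσ_def
  have hN0 : ∀ γ, 0 ≤ Nf γ := fun γ => nsq_nonneg _
  have hσ0 : 0 ≤ σ := Finset.sum_nonneg fun γ _ => hN0 γ
  have hipsq : ∀ γ : ι, ∑ δ, (ip (B γ) (B δ))^2 = (Nf γ)^2 := by
    intro γ
    rw [Finset.sum_eq_single_of_mem γ (Finset.mem_univ γ)]
    · rfl
    · intro δ _ hne
      rw [horth γ δ (Ne.symm hne)]
      norm_num
  have hsum1 : ∑ γ, ∑ δ, (ip (B γ) (B δ))^2 = ∑ γ, (Nf γ)^2 :=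
    Finset.sum_congr rfl fun γ _ => hipsq γ
  have hNsqle : ∑ γ, (Nf γ)^2 ≤ σ * σ := by
    rw [hσ_def, Finset.sum_mul]
    apply Finset.sum_le_sum
    intro γ _
    rw [sq]
    apply mul_le_mul_of_nonneg_left _ (hN0 γ)
    exact Finset.single_le_sum (fun δ _ => hN0 δ) (Finset.mem_univ γ)
  have hcommerase : ∀ γ : ι, ∑ δ, nsq (comm (B γ) (B δ))
      = ∑ δ ∈ Finset.univ.erase γ, nsq (comm (B γ) (B δ)) := by
    intro γ
    rw [← Finset.add_sum_erase _ _ (Finset.mem_univ γ), comm_self, nsq_zero, zero_add]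
  by_cases hcard : (Finset.univ : Finset ι).card ≤ 1
  · -- degenerate: no distinct pairs
    have hcz : ∀ γ : ι, ∑ δ ∈ Finset.univ.erase γ, nsq (comm (B γ) (B δ)) = 0 := by
      intro γ
      have : Finset.univ.erase γ = ∅ := by
        apply Finset.card_eq_zero.1
        have := Finset.card_erase_of_mem (Finset.mem_univ γ)
        omega
      rw [this, Finset.sum_empty]
    rw [hsum1, Finset.sum_congr rfl (fun γ _ => (hcommerase γ).trans (hcz γ))]
    simp only [Finset.sum_const_zero, add_zero]
    nlinarith [hNsqle, sq_nonneg σ]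
  · push_neg at hcard
    have huniv_ne : (Finset.univ : Finset ι).Nonempty := Finset.card_pos.1 (by omega)
    obtain ⟨γ₀, _, hmax⟩ := Finset.exists_max_image Finset.univ Nf huniv_ne
    have herase_ne : (Finset.univ.erase γ₀).Nonempty := by
      apply Finset.card_pos.1
      have := Finset.card_erase_of_mem (Finset.mem_univ γ₀)
      omega
    obtain ⟨δ₀, hδ₀mem, hmax2⟩ := Finset.exists_max_image (Finset.univ.erase γ₀) Nf herase_ne
    set x := Nf γ₀ with hx_def
    set y := Nf δ₀ with hy_def
    have hδ₀ne : δ₀ ≠ γ₀ := (Finset.mem_erase.1 hδ₀mem).1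
    have hyx : y ≤ x := hmax δ₀ (Finset.mem_univ _)
    have hx0 : 0 ≤ x := hN0 γ₀
    have hy0 : 0 ≤ y := hN0 δ₀
    have hxyσ : x + y ≤ σ := by
      have hp : ({γ₀, δ₀} : Finset ι).Nonempty := ⟨γ₀, by simp⟩
      have hsub : ({γ₀, δ₀} : Finset ι) ⊆ Finset.univ := Finset.subset_univ _
      have hpair : ∑ γ ∈ ({γ₀, δ₀} : Finset ι), Nf γ = x + y :=
        Finset.sum_pair (Ne.symm hδ₀ne)
      rw [← hpair, hσ_def]
      exact Finset.sum_le_sum_of_subset_of_nonneg hsub fun γ _ _ => hN0 γ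
    set cap : ι → ℝ := fun γ => if γ = γ₀ then y else x with hcap_def
    have hlu : ∀ γ : ι, ∑ δ ∈ Finset.univ.erase γ, nsq (comm (B γ) (B δ))
        ≤ Nf γ * ((∑ δ ∈ Finset.univ.erase γ, Nf δ) + cap γ) := by
      intro γ
      apply lu (Finset.univ.erase γ) (B γ) (hsym γ) B (fun δ _ => hsym δ)
        (fun a _ b _ hne => horth a b hne)
      · simp only [hcap_def]
        by_cases h : γ = γ₀ <;> simp [h, hx0, hy0]
      · intro δ hδ
        simp only [hcap_def]
        by_cases h : γ = γ₀
        · rw [if_pos h]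
          subst h
          exact hmax2 δ hδ
        · rw [if_neg h]
          exact hmax δ (Finset.mem_univ _)
    have herase_sum : ∀ γ : ι, ∑ δ ∈ Finset.univ.erase γ, Nf δ = σ - Nf γ := by
      intro γ
      have := Finset.add_sum_erase Finset.univ Nf (Finset.mem_univ γ)
      rw [hσ_def]
      linarith
    have hcomm_tot : ∑ γ, ∑ δ, nsq (comm (B γ) (B δ))
        ≤ ∑ γ, Nf γ * ((σ - Nf γ) + cap γ) := by
      rw [Finset.sum_congr rfl (fun γ _ => hcommerase γ)]
      apply Finset.sum_le_sum
      intro γ _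
      have := hlu γ
      rw [herase_sum γ] at this
      exact this
    have hcap_sum : ∑ γ, Nf γ * cap γ = x*y + x*(σ - x) := by
      rw [← Finset.add_sum_erase _ _ (Finset.mem_univ γ₀)]
      have h1 : Nf γ₀ * cap γ₀ = x * y := by
        simp only [hcap_def, if_pos rfl]
        rfl
      have h2 : ∑ γ ∈ Finset.univ.erase γ₀, Nf γ * cap γ
          = ∑ γ ∈ Finset.univ.erase γ₀, Nf γ * x := by
        apply Finset.sum_congr rfl
        intro γ hγ
        simp only [hcap_def]
        rw [if_neg (Finset.mem_erase.1 hγ).1]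
      rw [h1, h2, ← Finset.sum_mul, herase_sum γ₀]
      ring
    have hmid : ∑ γ, Nf γ * ((σ - Nf γ) + cap γ)
        = (σ*σ - ∑ γ, (Nf γ)^2) + (x*y + x*(σ - x)) := by
      have h1 : ∀ γ : ι, Nf γ * ((σ - Nf γ) + cap γ)
          = Nf γ * σ - (Nf γ)^2 + Nf γ * cap γ := by
        intro γ; ring
      rw [Finset.sum_congr rfl (fun γ _ => h1 γ), ← hcap_sum]
      rw [Finset.sum_add_distrib, Finset.sum_sub_distrib, ← Finset.sum_mul]
    have hscal : x*(σ - x) + x*y ≤ σ^2/2 := by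
      nlinarith [sq_nonneg (2*x - σ), sq_nonneg (x - y),
        mul_nonneg (by linarith : (0:ℝ) ≤ σ - (x+y)) (by linarith : (0:ℝ) ≤ σ + (x+y))]
    rw [hsum1]
    calc (∑ γ, (Nf γ)^2) + ∑ γ, ∑ δ, nsq (comm (B γ) (B δ))
        ≤ (∑ γ, (Nf γ)^2) + ((σ*σ - ∑ γ, (Nf γ)^2) + (x*y + x*(σ - x))) := by
          rw [← hmid]; linarith [hcomm_tot]
      _ = σ*σ + (x*(σ - x) + x*y) := by ring
      _ ≤ σ*σ + σ^2/2 := by linarith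
      _ = 3/2 * σ^2 := by ring


lemma comm_smul_left {m : Type*} [Fintype m] (c : ℝ) (A Z : Matrix m m ℝ) :
    comm (c • A) Z = c • comm A Z := by
  unfold comm
  rw [Matrix.smul_mul, Matrix.mul_smul, smul_sub]

lemma comm_smul_right {m : Type*} [Fintype m] (c : ℝ) (A Z : Matrix m m ℝ) :
    comm Z (c • A) = c • comm Z A := by
  unfold comm
  rw [Matrix.smul_mul, Matrix.mul_smul, smul_sub]

lemma comm_sum_left {m : Type*} [Fintype m] {ι : Type*} (s : Finset ι)
    (f : ι → Matrix m m ℝ) (Z : Matrix m m ℝ) :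
    comm (∑ a ∈ s, f a) Z = ∑ a ∈ s, comm (f a) Z := by
  unfold comm
  rw [Matrix.sum_mul, Matrix.mul_sum, ← Finset.sum_sub_distrib]

lemma comm_sum_right {m : Type*} [Fintype m] {ι : Type*} (s : Finset ι)
    (f : ι → Matrix m m ℝ) (Z : Matrix m m ℝ) :
    comm Z (∑ a ∈ s, f a) = ∑ a ∈ s, comm Z (f a) := by
  unfold comm
  rw [Matrix.sum_mul, Matrix.mul_sum, ← Finset.sum_sub_distrib]

lemma rot_nsq_sum {n : ℕ} {ι : Type*} [Fintype ι] [DecidableEq ι]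
    (V : Matrix ι ι ℝ) (hW : ∀ α α' : ι, ∑ γ, V α γ * V α' γ = if α = α' then (1:ℝ) else 0)
    (M : ι → Matrix (Fin n) (Fin n) ℝ) :
    ∑ γ, nsq (∑ α, V α γ • M α) = ∑ α, nsq (M α) := by
  have h1 : ∀ γ : ι, nsq (∑ α, V α γ • M α)
      = ∑ α, ∑ α', (V α γ * V α' γ) * ip (M α) (M α') := by
    intro γ
    unfold nsq
    rw [ip_sum_left]
    apply Finset.sum_congr rfl; intro α _
    rw [ip_smul_left, ip_sum_right, Finset.mul_sum]
    apply Finset.sum_congr rfl; intro α' _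
    rw [ip_smul_right]
    ring
  rw [Finset.sum_congr rfl (fun γ _ => h1 γ), Finset.sum_comm]
  apply Finset.sum_congr rfl; intro α _
  have h2 : ∑ γ : ι, ∑ α', (V α γ * V α' γ) * ip (M α) (M α')
      = ∑ α', ∑ γ : ι, (V α γ * V α' γ) * ip (M α) (M α') := Finset.sum_comm
  rw [h2]
  have h3 : ∀ α' : ι, ∑ γ : ι, (V α γ * V α' γ) * ip (M α) (M α')
      = (if α = α' then (1:ℝ) else 0) * ip (M α) (M α') := by
    intro α'
    rw [← Finset.sum_mul, hW α α']
  rw [Finset.sum_congr rfl (fun α' _ => h3 α')]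
  have h4 : ∀ α' : ι, (if α = α' then (1:ℝ) else 0) * ip (M α) (M α')
      = if α = α' then ip (M α) (M α') else 0 := by
    intro α'
    by_cases h : α = α' <;> simp [h]
  rw [Finset.sum_congr rfl (fun α' _ => h4 α'), Finset.sum_ite_eq Finset.univ α]
  simp [nsq]

lemma LiLi {n : ℕ} {ι : Type*} [Fintype ι] [DecidableEq ι]
    (B : ι → Matrix (Fin n) (Fin n) ℝ) (hsym : ∀ γ, (B γ)ᵀ = B γ) :
    (∑ γ, ∑ δ, (ip (B γ) (B δ))^2) + (∑ γ, ∑ δ, nsq (comm (B γ) (B δ)))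
      ≤ 3/2 * (∑ γ, nsq (B γ))^2 := by
  classical
  set G : Matrix ι ι ℝ := Matrix.of (fun γ δ => ip (B γ) (B δ)) with hG_def
  have hGsym : Gᵀ = G := by
    ext γ δ
    simp only [hG_def, Matrix.transpose_apply, Matrix.of_apply]
    exact ip_comm _ _
  obtain ⟨V, mu, hVVt, hVtV, hdg⟩ := spectral_real G hGsym
  have hW : ∀ α α' : ι, ∑ γ, V α γ * V α' γ = if α = α' then (1:ℝ) else 0 := by
    intro α α'
    have h := congrFun (congrFun hVVt α) α'
    rw [Matrix.mul_apply] at h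
    simp only [Matrix.transpose_apply] at h
    rw [h, Matrix.one_apply]
  set B' : ι → Matrix (Fin n) (Fin n) ℝ := fun γ => ∑ α, V α γ • B α with hB'_def
  have hipB' : ∀ γ δ : ι, ip (B' γ) (B' δ) = (Vᵀ * G * V) γ δ := by
    intro γ δ
    have hR : (Vᵀ * G * V) γ δ = ∑ b, ∑ a, V a γ * G a b * V b δ := by
      rw [Matrix.mul_apply]
      apply Finset.sum_congr rfl
      intro b _
      rw [Matrix.mul_apply, Finset.sum_mul]
      apply Finset.sum_congr rfl
      intro a _
      rw [Matrix.transpose_apply]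
    have hL : ip (B' γ) (B' δ) = ∑ a, ∑ b, V a γ * G a b * V b δ := by
      rw [hB'_def]
      simp only []
      rw [ip_sum_left]
      apply Finset.sum_congr rfl; intro a _
      rw [ip_smul_left, ip_sum_right, Finset.mul_sum]
      apply Finset.sum_congr rfl; intro b _
      rw [ip_smul_right, hG_def]
      simp only [Matrix.of_apply]
      ring
    rw [hL, hR, Finset.sum_comm]
  have hsym' : ∀ γ, (B' γ)ᵀ = B' γ := by
    intro γ
    rw [hB'_def]
    simp only []
    rw [Matrix.transpose_sum]
    apply Finset.sum_congr rfl
    intro α _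
    rw [Matrix.transpose_smul, hsym α]
  have horth' : ∀ a b : ι, a ≠ b → ip (B' a) (B' b) = 0 := by
    intro a b hne
    rw [hipB' a b, hdg]
    exact Matrix.diagonal_apply_ne mu hne
  have hmain := LiLi_orth B' hsym' horth'
  -- (a) sum of squared norms preserved
  have ha : ∑ γ, nsq (B' γ) = ∑ γ, nsq (B γ) := rot_nsq_sum V hW B
  -- (b) sum of squared inner products preserved
  have hb : ∑ γ, ∑ δ, (ip (B' γ) (B' δ))^2 = ∑ γ, ∑ δ, (ip (B γ) (B δ))^2 := by
    have h1 : ∑ γ, ∑ δ, (ip (B' γ) (B' δ))^2 = ip (Vᵀ * G * V) (Vᵀ * G * V) := by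
      rw [show ip (Vᵀ * G * V) (Vᵀ * G * V)
        = ∑ γ, ∑ δ, (Vᵀ * G * V) γ δ * (Vᵀ * G * V) γ δ from rfl]
      apply Finset.sum_congr rfl; intro γ _
      apply Finset.sum_congr rfl; intro δ _
      rw [hipB' γ δ]; ring
    have h2 : ∑ γ, ∑ δ, (ip (B γ) (B δ))^2 = ip G G := by
      rw [show ip G G = ∑ γ, ∑ δ, G γ δ * G γ δ from rfl]
      apply Finset.sum_congr rfl; intro γ _
      apply Finset.sum_congr rfl; intro δ _
      rw [hG_def]
      simp only [Matrix.of_apply]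
      ring
    rw [h1, h2, ip_conj V hVVt]
  -- (c) commutator sums preserved
  have hc : ∑ γ, ∑ δ, nsq (comm (B' γ) (B' δ)) = ∑ γ, ∑ δ, nsq (comm (B γ) (B δ)) := by
    have hstep1 : ∀ Z : Matrix (Fin n) (Fin n) ℝ,
        ∑ γ, nsq (comm (B' γ) Z) = ∑ α, nsq (comm (B α) Z) := by
      intro Z
      have hcl : ∀ γ, comm (B' γ) Z = ∑ α, V α γ • comm (B α) Z := by
        intro γ
        rw [hB'_def]
        simp only []
        rw [comm_sum_left]
        apply Finset.sum_congr rfl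
        intro α _
        rw [comm_smul_left]
      rw [Finset.sum_congr rfl (fun γ _ => by rw [hcl γ])]
      exact rot_nsq_sum V hW (fun α => comm (B α) Z)
    have hstep2 : ∀ Z : Matrix (Fin n) (Fin n) ℝ,
        ∑ δ, nsq (comm Z (B' δ)) = ∑ β, nsq (comm Z (B β)) := by
      intro Z
      have hcr : ∀ δ, comm Z (B' δ) = ∑ β, V β δ • comm Z (B β) := by
        intro δ
        rw [hB'_def]
        simp only []
        rw [comm_sum_right]
        apply Finset.sum_congr rfl
        intro β _
        rw [comm_smul_right]
      rw [Finset.sum_congr rfl (fun δ _ => by rw [hcr δ])]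
      exact rot_nsq_sum V hW (fun β => comm Z (B β))
    calc ∑ γ, ∑ δ, nsq (comm (B' γ) (B' δ))
        = ∑ δ, ∑ γ, nsq (comm (B' γ) (B' δ)) := Finset.sum_comm
      _ = ∑ δ, ∑ α, nsq (comm (B α) (B' δ)) :=
          Finset.sum_congr rfl fun δ _ => hstep1 (B' δ)
      _ = ∑ α, ∑ δ, nsq (comm (B α) (B' δ)) := Finset.sum_comm
      _ = ∑ α, ∑ β, nsq (comm (B α) (B β)) :=
          Finset.sum_congr rfl fun α _ => hstep2 (B α)
  rw [ha, hb, hc] at hmain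
  exact hmain

lemma trace_eq_sum {n : ℕ} (X : Matrix (Fin n) (Fin n) ℝ) : Matrix.trace X = ∑ i, X i i := rfl

lemma cross {n : ℕ} (hn : 1 ≤ n) (A₀ Bm : Matrix (Fin n) (Fin n) ℝ) (hd : A₀.IsDiag)
    (hB : Bmᵀ = Bm) (htrB : Matrix.trace Bm = 0) :
    (ip A₀ Bm)^2 + nsq (comm A₀ Bm)
      ≤ 2 * (nsq A₀ - (Matrix.trace A₀)^2 / n) * nsq Bm := by
  have hnR : (0:ℝ) < (n:ℝ) := by exact_mod_cast hn
  set a : Fin n → ℝ := fun i => A₀ i i with ha_def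
  set Hm : ℝ := Matrix.trace A₀ with hH_def
  have hHsum : Hm = ∑ i, a i := trace_eq_sum A₀
  set abar : Fin n → ℝ := fun i => a i - Hm/n with habar_def
  set T : ℝ := ∑ i, (abar i)^2 with hT_def
  have hT0 : 0 ≤ T := Finset.sum_nonneg fun i _ => sq_nonneg _
  have hoff : ∀ i j : Fin n, i ≠ j → A₀ i j = 0 := fun i j hij => hd hij
  have hrow : ∀ (i : Fin n) (Y : Matrix (Fin n) (Fin n) ℝ), ∑ j, A₀ i j * Y i j = a i * Y i i := by
    intro i Y
    rw [Finset.sum_eq_single_of_mem i (Finset.mem_univ i)]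
    intro j _ hne
    rw [hoff i j (Ne.symm hne), zero_mul]
  have hipS : ip A₀ Bm = ∑ i, a i * Bm i i := by
    unfold ip
    exact Finset.sum_congr rfl fun i _ => hrow i Bm
  have htrB' : ∑ i, Bm i i = 0 := by rw [← trace_eq_sum]; exact htrB
  have hipS2 : ip A₀ Bm = ∑ i, abar i * Bm i i := by
    rw [hipS]
    have h1 : ∑ i, abar i * Bm i i = ∑ i, (a i * Bm i i - (Hm/n) * Bm i i) := by
      apply Finset.sum_congr rfl
      intro i _
      rw [habar_def]
      ring
    rw [h1, Finset.sum_sub_distrib, ← Finset.mul_sum, htrB', mul_zero, sub_zero]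
  have hCS : (ip A₀ Bm)^2 ≤ T * ∑ i, (Bm i i)^2 := by
    rw [hipS2, hT_def]
    exact Finset.sum_mul_sq_le_sq_mul_sq Finset.univ abar (fun i => Bm i i)
  have hentry : ∀ i j : Fin n, comm A₀ Bm i j = (a i - a j) * Bm i j := by
    intro i j
    have h1 : (A₀ * Bm) i j = a i * Bm i j := by
      rw [Matrix.mul_apply, Finset.sum_eq_single_of_mem i (Finset.mem_univ i)]
      intro k _ hne
      rw [hoff i k (Ne.symm hne), zero_mul]
    have h2 : (Bm * A₀) i j = Bm i j * a j := by
      rw [Matrix.mul_apply, Finset.sum_eq_single_of_mem j (Finset.mem_univ j)]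
      intro k _ hne
      rw [hoff k j hne, mul_zero]
    simp only [comm, Matrix.sub_apply, h1, h2]
    ring
  have hpairbound : ∀ i j : Fin n, i ≠ j → (abar i - abar j)^2 ≤ 2*T := by
    intro i j hne
    have hsub : ({i, j} : Finset (Fin n)) ⊆ Finset.univ := Finset.subset_univ _
    have hpair : ∑ k ∈ ({i, j} : Finset (Fin n)), (abar k)^2 = (abar i)^2 + (abar j)^2 :=
      Finset.sum_pair hne
    have hle : (abar i)^2 + (abar j)^2 ≤ T := by
      rw [← hpair, hT_def]
      exact Finset.sum_le_sum_of_subset_of_nonneg hsub fun k _ _ => sq_nonneg _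
    nlinarith [sq_nonneg (abar i + abar j)]
  have hcommle : nsq (comm A₀ Bm)
      ≤ ∑ i, ∑ j, (if i = j then 0 else 2*T*(Bm i j)^2) := by
    unfold nsq ip
    apply Finset.sum_le_sum
    intro i _
    apply Finset.sum_le_sum
    intro j _
    rw [hentry i j]
    by_cases hij : i = j
    · rw [if_pos hij, hij]
      simp
    · rw [if_neg hij]
      have h1 : a i - a j = abar i - abar j := by rw [habar_def]; ring
      have h2 := hpairbound i j hij
      rw [h1]
      nlinarith [sq_nonneg (Bm i j), sq_nonneg ((abar i - abar j) * Bm i j)]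
  have hsplit : ∑ i, ∑ j, (if i = j then 0 else 2*T*(Bm i j)^2)
      = 2*T*(nsq Bm) - 2*T*(∑ i, (Bm i i)^2) := by
    have h1 : ∀ i j : Fin n, (if i = j then (0:ℝ) else 2*T*(Bm i j)^2)
        = 2*T*(Bm i j)^2 - (if j = i then 2*T*(Bm i i)^2 else 0) := by
      intro i j
      by_cases hij : i = j
      · rw [if_pos hij, if_pos hij.symm, hij]
        ring
      · rw [if_neg hij, if_neg (Ne.symm hij)]
        ring
    have h2 : ∑ i, ∑ j, (if i = j then (0:ℝ) else 2*T*(Bm i j)^2)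
        = ∑ i, (∑ j, 2*T*(Bm i j)^2 - 2*T*(Bm i i)^2) := by
      apply Finset.sum_congr rfl
      intro i _
      rw [Finset.sum_congr rfl (fun j _ => h1 i j), Finset.sum_sub_distrib]
      congr 1
      rw [Finset.sum_ite_eq' Finset.univ i (fun _ => 2*T*(Bm i i)^2)]
      simp
    rw [h2, Finset.sum_sub_distrib]
    have h3 : ∑ i, ∑ j, 2*T*(Bm i j)^2 = 2*T*(nsq Bm) := by
      have hrowm : ∀ i : Fin n, ∑ j, 2*T*(Bm i j)^2 = 2*T * ∑ j, (Bm i j)^2 :=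
        fun i => (Finset.mul_sum _ _ _).symm
      rw [Finset.sum_congr rfl (fun i _ => hrowm i), ← Finset.mul_sum]
      congr 1
      rw [show nsq Bm = ∑ i, ∑ j, Bm i j * Bm i j from rfl]
      apply Finset.sum_congr rfl; intro i _
      apply Finset.sum_congr rfl; intro j _
      ring
    rw [h3, ← Finset.mul_sum]
  have hdiag2 : 0 ≤ ∑ i, (Bm i i)^2 := Finset.sum_nonneg fun i _ => sq_nonneg _
  have hTval : T = nsq A₀ - Hm^2/n := by
    have hnsqA : nsq A₀ = ∑ i, (a i)^2 := by
      rw [show nsq A₀ = ∑ i, ∑ j, A₀ i j * A₀ i j from rfl]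
      apply Finset.sum_congr rfl
      intro i _
      rw [hrow i A₀]
      rw [ha_def]
      ring
    have hexp : T = (∑ i, (a i)^2) - 2*(Hm/n)*Hm + n*(Hm/n)^2 := by
      rw [hT_def]
      have h1 : ∀ i : Fin n, (abar i)^2 = (a i)^2 - 2*(Hm/n)*(a i) + (Hm/n)^2 := by
        intro i
        rw [habar_def]
        ring
      rw [Finset.sum_congr rfl (fun i _ => h1 i), Finset.sum_add_distrib, Finset.sum_sub_distrib,
        ← Finset.mul_sum, ← hHsum, Finset.sum_const, nsmul_eq_mul]
      simp [Finset.card_univ]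
    rw [hexp, hnsqA]
    field_simp
    ring
  have hnsqB : 0 ≤ nsq Bm := nsq_nonneg _
  calc (ip A₀ Bm)^2 + nsq (comm A₀ Bm)
      ≤ T * (∑ i, (Bm i i)^2) + (2*T*(nsq Bm) - 2*T*(∑ i, (Bm i i)^2)) := by
        rw [← hsplit]
        linarith [hcommle]
    _ = 2*T*(nsq Bm) - T*(∑ i, (Bm i i)^2) := by ring
    _ ≤ 2*T*(nsq Bm) := by nlinarith
    _ = 2 * (nsq A₀ - Hm^2/n) * nsq Bm := by rw [hTval]


end SW

open SW in
/-- The estimate `R₁ ≤ |h|⁴ + (2|h̊|² − (2/n)H²) P − ξ⁻¹ P²` from Section 2. -/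
theorem stmt_3 (p n : ℕ) [NeZero p] (hp : 2 ≤ p) (hn : 1 ≤ n)
    (A : Fin p → Matrix (Fin n) (Fin n) ℝ)
    (hA : ∀ α, (A α)ᵀ = A α)
    (hdiag : (A 0).IsDiag)
    (htr : ∀ α, α ≠ 0 → Matrix.trace (A α) = 0)
    (H h2 hring2 P R1 ξinv : ℝ)
    (hH : H = Matrix.trace (A 0))
    (hh2 : h2 = ∑ α, ∑ i, ∑ j, (A α i j) ^ 2)
    (hhring2 : hring2 = h2 - H ^ 2 / (n : ℝ))
    (hP : P = ∑ α ∈ Finset.univ.filter (· ≠ (0 : Fin p)), ∑ i, ∑ j, (A α i j) ^ 2)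
    (hR1 : R1 = (∑ α, ∑ β, (∑ i, ∑ j, A α i j * A β i j) ^ 2)
        + ∑ α, ∑ β, ∑ i, ∑ j, ((A α * A β - A β * A α) i j) ^ 2)
    (hξ : ξinv = if p = 2 then (2 : ℝ) else 3 / 2) :
    R1 ≤ h2 ^ 2 + (2 * hring2 - (2 / (n : ℝ)) * H ^ 2) * P - ξinv * P ^ 2 := by
  classical
  set S := Finset.univ.filter (· ≠ (0 : Fin p)) with hS_def
  -- convert squared-entry sums to nsq
  have hnsq_eq : ∀ α, (∑ i, ∑ j, (A α i j) ^ 2) = nsq (A α) := by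
    intro α
    rw [show nsq (A α) = ∑ i, ∑ j, A α i j * A α i j from rfl]
    apply Finset.sum_congr rfl; intro i _
    apply Finset.sum_congr rfl; intro j _
    ring
  have hcomm_eq : ∀ α β, (∑ i, ∑ j, ((A α * A β - A β * A α) i j) ^ 2)
      = nsq (comm (A α) (A β)) := by
    intro α β
    rw [show nsq (comm (A α) (A β)) = ∑ i, ∑ j, comm (A α) (A β) i j * comm (A α) (A β) i j
      from rfl]
    apply Finset.sum_congr rfl; intro i _
    apply Finset.sum_congr rfl; intro j _
    rw [show comm (A α) (A β) = A α * A β - A β * A α from rfl]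
    ring
  set q : Fin p → Fin p → ℝ :=
    fun α β => (ip (A α) (A β))^2 + nsq (comm (A α) (A β)) with hq_def
  have hR1q : R1 = ∑ α, ∑ β, q α β := by
    rw [hR1]
    rw [← Finset.sum_add_distrib]
    apply Finset.sum_congr rfl; intro α _
    rw [← Finset.sum_add_distrib]
    apply Finset.sum_congr rfl; intro β _
    rw [hq_def]
    simp only []
    rw [hcomm_eq α β]
    rfl
  -- splitting at index 0
  have hsplitS : ∀ f : Fin p → ℝ, (∑ α, f α) = f 0 + ∑ α ∈ S, f α := by
    intro f
    rw [hS_def, Finset.filter_ne']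
    exact (Finset.add_sum_erase _ f (Finset.mem_univ 0)).symm
  set N₀ := nsq (A 0) with hN₀_def
  set P' := ∑ α ∈ S, nsq (A α) with hP'_def
  have hPP' : P = P' := by
    rw [hP, hP'_def]
    exact Finset.sum_congr rfl fun α _ => hnsq_eq α
  have hh2' : h2 = N₀ + P' := by
    rw [hh2, hsplitS, hnsq_eq 0, hP'_def]
    congr 1
    exact Finset.sum_congr rfl fun α _ => hnsq_eq α
  have hmemS : ∀ β ∈ S, β ≠ 0 := by
    intro β hβ
    rw [hS_def] at hβ
    exact (Finset.mem_filter.1 hβ).2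
  have hq00 : q 0 0 = N₀^2 := by
    rw [hq_def]
    simp only []
    rw [comm_self, nsq_zero, hN₀_def]
    rw [show ip (A 0) (A 0) = nsq (A 0) from rfl]
    ring
  have hqswap : ∀ α β, q α β = q β α := by
    intro α β
    rw [hq_def]
    simp only []
    rw [ip_comm, comm_swap, nsq_neg]
  -- cross bound
  have hcross : ∀ β ∈ S, q 0 β ≤ 2 * (N₀ - H^2/(n:ℝ)) * nsq (A β) := by
    intro β hβ
    rw [hq_def]
    simp only []
    rw [hN₀_def, hH]
    exact cross hn (A 0) (A β) hdiag (hA β) (htr β (hmemS β hβ))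
  have hcross_sum : ∑ β ∈ S, q 0 β ≤ 2 * (N₀ - H^2/(n:ℝ)) * P' := by
    rw [hP'_def, Finset.mul_sum]
    exact Finset.sum_le_sum hcross
  -- the Li-Li block
  have hLL : ∑ α ∈ S, ∑ β ∈ S, q α β ≤ (3 - ξinv) * P'^2 := by
    by_cases hp2 : p = 2
    · subst hp2
      rw [hξ]
      simp only [if_pos rfl]
      have h10 : (1 : Fin 2) ≠ 0 := by
        intro h
        have h' := congrArg Fin.val h
        simp at h'
      have hS1 : S = {(1 : Fin 2)} := by
        rw [hS_def]
        ext x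
        simp only [Finset.mem_filter, Finset.mem_univ, true_and, Finset.mem_singleton]
        constructor
        · intro hx
          have h2v := x.isLt
          refine Fin.ext ?_
          have hx0 : x.val ≠ 0 := by
            intro hv
            apply hx
            exact Fin.ext (by simpa using hv)
          simp only [Fin.val_one]
          omega
        · intro hx
          rw [hx]
          exact h10
      rw [hS1, Finset.sum_singleton, Finset.sum_singleton, hP'_def, hS1,
        Finset.sum_singleton, hq_def]
      simp only []
      rw [comm_self, nsq_zero, show ip (A 1) (A 1) = nsq (A 1) from rfl]
      norm_num
    · rw [hξ]
      simp only [if_neg hp2]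
      have hLiLi := LiLi (ι := {α : Fin p // α ≠ 0}) (fun γ => A γ.1) (fun γ => hA γ.1)
      have hmem : ∀ x : Fin p, x ∈ S ↔ x ≠ 0 := by
        intro x
        rw [hS_def]
        simp [Finset.mem_filter]
      have hconv1 : ∑ α ∈ S, ∑ β ∈ S, q α β
          = ∑ γ : {α : Fin p // α ≠ 0}, ∑ δ : {α : Fin p // α ≠ 0}, q γ.1 δ.1 := by
        rw [Finset.sum_subtype S hmem (fun α => ∑ β ∈ S, q α β)]
        apply Finset.sum_congr rfl
        intro γ _
        rw [Finset.sum_subtype S hmem (fun β => q γ.1 β)]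
      have hconv2 : P' = ∑ γ : {α : Fin p // α ≠ 0}, nsq (A γ.1) := by
        rw [hP'_def]
        rw [Finset.sum_subtype S hmem (fun α => nsq (A α))]
      have hqsplit : ∑ γ : {α : Fin p // α ≠ 0}, ∑ δ : {α : Fin p // α ≠ 0}, q γ.1 δ.1
          = (∑ γ : {α : Fin p // α ≠ 0}, ∑ δ : {α : Fin p // α ≠ 0}, (ip (A γ.1) (A δ.1))^2)
            + ∑ γ : {α : Fin p // α ≠ 0}, ∑ δ : {α : Fin p // α ≠ 0}, nsq (comm (A γ.1) (A δ.1)) := by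
        rw [← Finset.sum_add_distrib]
        apply Finset.sum_congr rfl; intro γ _
        rw [← Finset.sum_add_distrib]
      rw [hconv1, hconv2, hqsplit]
      have h32 : (3:ℝ) - 3/2 = 3/2 := by norm_num
      rw [h32]
      exact hLiLi
  -- assemble
  have hR1split : R1 = N₀^2 + 2 * (∑ β ∈ S, q 0 β) + ∑ α ∈ S, ∑ β ∈ S, q α β := by
    rw [hR1q, hsplitS (fun α => ∑ β, q α β)]
    rw [hsplitS (fun β => q 0 β), hq00]
    have h1 : ∑ α ∈ S, ∑ β, q α β = ∑ α ∈ S, (q α 0 + ∑ β ∈ S, q α β) :=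
      Finset.sum_congr rfl fun α _ => hsplitS (fun β => q α β)
    rw [h1, Finset.sum_add_distrib (s := S) (f := fun α => q α 0)
      (g := fun α => ∑ β ∈ S, q α β)]
    have h2' : ∑ α ∈ S, q α 0 = ∑ β ∈ S, q 0 β :=
      Finset.sum_congr rfl fun α _ => hqswap α 0
    rw [h2']
    ring
  have hP'0 : 0 ≤ P' := Finset.sum_nonneg fun α _ => nsq_nonneg _
  rw [hR1split, hh2', hPP']
  have hfinal : N₀^2 + 2 * (2 * (N₀ - H^2/(n:ℝ)) * P') + (3 - ξinv) * P'^2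
      = (N₀ + P')^2 + (2 * hring2 - (2/(n:ℝ)) * H^2) * P' - ξinv * P'^2 := by
    rw [hhring2, hh2']
    ring
  linarith [hcross_sum, hLL, hfinal]
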